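/- arXiv:2410.12670 — 4 statements merged into one kernel-verified Lean document; each statement's English description precedes it below -/
import Mathlib

section
/- Let $(x_i)_{1\le i\le n}$ be distinct real numbers and $(\lambda_i)_{1\le i\le n}$ nonnegative weights with $\sum_i \lambda_i = 1$. If $\sum_i \lambda_i x_i^2 - (\sum_i \lambda_i x_i)^2 \le \varepsilon$, then $\sum_i \lambda_i(1-\lambda_i) \le 2\varepsilon / \min_{i\ne j}|x_i - x_j|^2$. -/
open scoped BigOperators

/-- **Near-equality in quadratic Jensen's inequality.**
If the Jensen gap `∑ λᵢ xᵢ² - (∑ λᵢ xᵢ)²` is at most `ε` for distinct reals `xᵢ` and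
probability weights `λᵢ`, then `∑ λᵢ(1-λᵢ) ≤ 2ε / min_{i≠j} |xᵢ - xⱼ|²`. -/
theorem stmt_0 (n : ℕ) (hn : 2 ≤ n) (x : Fin n → ℝ) (hx : Function.Injective x)
    (lam : Fin n → ℝ) (hlam : ∀ i, 0 ≤ lam i) (hsum : ∑ i, lam i = 1)
    (ε : ℝ)
    (hgap : ∑ i, lam i * (x i) ^ 2 - (∑ i, lam i * x i) ^ 2 ≤ ε) :
    ∑ i, lam i * (1 - lam i) ≤
      2 * ε / sInf {d : ℝ | ∃ i j, i ≠ j ∧ d = (x i - x j) ^ 2} := by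
  set S : Set ℝ := {d : ℝ | ∃ i j, i ≠ j ∧ d = (x i - x j) ^ 2} with hS
  have hSfin : S.Finite := by
    have hsub : S ⊆ Set.range (fun p : Fin n × Fin n => (x p.1 - x p.2) ^ 2) := by
      rintro d ⟨i, j, _, rfl⟩; exact ⟨(i, j), rfl⟩
    exact (Set.finite_range _).subset hsub
  have hSne : S.Nonempty := by
    refine ⟨(x ⟨0, by omega⟩ - x ⟨1, by omega⟩) ^ 2, ⟨0, by omega⟩, ⟨1, by omega⟩, ?_, rfl⟩
    simp [Fin.ext_iff]
  have hmem : sInf S ∈ S := hSne.csInf_mem hSfin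
  set m := sInf S with hm
  have hmpos : 0 < m := by
    obtain ⟨i, j, hij, hd⟩ := hmem
    rw [hd]
    exact pow_two_pos_of_ne_zero (sub_ne_zero.mpr fun h => hij (hx h))
  have hbdd : BddBelow S := hSfin.bddBelow
  have hmle : ∀ i j, i ≠ j → m ≤ (x i - x j) ^ 2 := fun i j hij =>
    csInf_le hbdd ⟨i, j, hij, rfl⟩
  set A := ∑ i, lam i * (x i) ^ 2 with hA
  set B := ∑ i, lam i * x i with hB
  -- inner sums
  have inner : ∀ i, ∑ j, lam j * (x i - x j) ^ 2 = A - 2 * x i * B + x i ^ 2 := by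
    intro i
    have h : ∀ j, lam j * (x i - x j) ^ 2
        = lam j * x j ^ 2 - 2 * x i * (lam j * x j) + x i ^ 2 * lam j := fun j => by ring
    simp_rw [h]
    rw [Finset.sum_add_distrib, Finset.sum_sub_distrib, ← Finset.mul_sum, ← Finset.mul_sum,
      hsum, mul_one, ← hA, ← hB]
  have key : ∑ i, ∑ j, lam i * (lam j * (x i - x j) ^ 2) = 2 * A - 2 * B ^ 2 := by
    have h1 : ∀ i, ∑ j, lam i * (lam j * (x i - x j) ^ 2)
        = lam i * (A - 2 * x i * B + x i ^ 2) := by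
      intro i
      rw [← Finset.mul_sum, inner i]
    simp_rw [h1]
    have h2 : ∀ i, lam i * (A - 2 * x i * B + x i ^ 2)
        = lam i * A - 2 * B * (lam i * x i) + lam i * x i ^ 2 := fun i => by ring
    simp_rw [h2]
    rw [Finset.sum_add_distrib, Finset.sum_sub_distrib, ← Finset.mul_sum, ← Finset.sum_mul,
      hsum, ← hB, ← hA]
    ring
  -- lower bound of the double sum by m * ∑ λ(1-λ)
  have lower : m * ∑ i, lam i * (1 - lam i) ≤ ∑ i, ∑ j, lam i * (lam j * (x i - x j) ^ 2) := by
    rw [Finset.mul_sum]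
    apply Finset.sum_le_sum
    intro i _
    have h1 : ∑ j, lam i * (lam j * (x i - x j) ^ 2)
        = ∑ j ∈ Finset.univ.erase i, lam i * (lam j * (x i - x j) ^ 2) := by
      rw [Finset.sum_erase]
      simp
    have h2 : lam i * (1 - lam i) = ∑ j ∈ Finset.univ.erase i, lam i * lam j := by
      rw [← Finset.mul_sum]
      congr 1
      have := Finset.sum_erase_add Finset.univ lam (Finset.mem_univ i)
      linarith [this.symm ▸ hsum]
    rw [h1, h2, Finset.mul_sum]
    apply Finset.sum_le_sum
    intro j hj
    have hij : i ≠ j := fun h => (Finset.mem_erase.mp hj).1 h.symm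
    have := hmle i j hij
    have hnn : 0 ≤ lam i * lam j := mul_nonneg (hlam i) (hlam j)
    calc m * (lam i * lam j) = lam i * lam j * m := by ring
      _ ≤ lam i * lam j * (x i - x j) ^ 2 := by
          exact mul_le_mul_of_nonneg_left this hnn
      _ = lam i * (lam j * (x i - x j) ^ 2) := by ring
  have hfinal : m * ∑ i, lam i * (1 - lam i) ≤ 2 * ε := by
    calc m * ∑ i, lam i * (1 - lam i) ≤ 2 * A - 2 * B ^ 2 := key ▸ lower
      _ = 2 * (A - B ^ 2) := by ring
      _ ≤ 2 * ε := by linarith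
  rw [le_div_iff₀ hmpos] at *
  linarith [hfinal]
end

section
/- Let $\hat{A}$ and $\hat{B}$ be Hermitian operators on an $n$-dimensional Hilbert space with spectra $(a_i)$ and $(b_j)$, and orthonormal eigenbases $(\ket{e_i})$, $(\ket{f_j})$ respectively. Then $\|[\hat{A},\hat{B}]\|_{op} \le \frac{\sqrt{n}}{2}\, \max_{i,j}|a_i - a_j|\, \max_{k,l}|b_k - b_l|\; d(\mathcal{B}_{\hat{A}}, \mathcal{B}_{\hat{B}})$, where $d(\mathcal{B}_1,\mathcal{B}_2)^2 = \sum_{i,j}|\langle e_i|f_j\rangle|^2(1-|\langle e_i|f_j\rangle|^2)$. -/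
open scoped BigOperators InnerProductSpace ComplexConjugate

section Stmt2Aux

/-- Parseval for an orthonormal basis. -/
lemma stmt2_parseval {n : ℕ} (e : OrthonormalBasis (Fin n) ℂ (EuclideanSpace ℂ (Fin n)))
    (x : EuclideanSpace ℂ (Fin n)) :
    ‖x‖ ^ 2 = ∑ i, ‖⟪e i, x⟫_ℂ‖ ^ 2 := by
  have h1 : ‖x‖ = ‖e.repr x‖ := (e.repr.norm_map x).symm
  rw [h1, EuclideanSpace.norm_eq, Real.sq_sqrt (by positivity)]
  simp_rw [e.repr_apply_apply]

/-- Operator norm is bounded by the Hilbert–Schmidt norm. -/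
lemma stmt2_opNorm_le_hs {n : ℕ}
    (T : EuclideanSpace ℂ (Fin n) →L[ℂ] EuclideanSpace ℂ (Fin n))
    (e : OrthonormalBasis (Fin n) ℂ (EuclideanSpace ℂ (Fin n))) :
    ‖T‖ ≤ Real.sqrt (∑ i, ∑ k, ‖⟪e i, T (e k)⟫_ℂ‖ ^ 2) := by
  apply T.opNorm_le_bound (Real.sqrt_nonneg _)
  intro x
  have key : ‖T x‖ ^ 2 ≤ (∑ i, ∑ k, ‖⟪e i, T (e k)⟫_ℂ‖ ^ 2) * ‖x‖ ^ 2 := by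
    rw [stmt2_parseval e (T x), Finset.sum_mul]
    refine Finset.sum_le_sum fun i _ => ?_
    have hx : ⟪e i, T x⟫_ℂ = ∑ k, e.repr x k * ⟪e i, T (e k)⟫_ℂ := by
      conv_lhs => rw [← e.sum_repr x, map_sum]
      rw [inner_sum]
      simp_rw [map_smul, inner_smul_right]
    rw [hx]
    calc ‖∑ k, e.repr x k * ⟪e i, T (e k)⟫_ℂ‖ ^ 2
        ≤ (∑ k, ‖e.repr x k‖ * ‖⟪e i, T (e k)⟫_ℂ‖) ^ 2 := by
          have h := norm_sum_le Finset.univ (fun k => e.repr x k * ⟪e i, T (e k)⟫_ℂ)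
          simp_rw [norm_mul] at h
          exact pow_le_pow_left₀ (norm_nonneg _) h 2
      _ ≤ (∑ k, ‖e.repr x k‖ ^ 2) * ∑ k, ‖⟪e i, T (e k)⟫_ℂ‖ ^ 2 :=
          Finset.sum_mul_sq_le_sq_mul_sq _ _ _
      _ = (∑ k, ‖⟪e i, T (e k)⟫_ℂ‖ ^ 2) * ‖x‖ ^ 2 := by
          rw [stmt2_parseval e x]
          simp_rw [e.repr_apply_apply]
          ring
  calc ‖T x‖ = Real.sqrt (‖T x‖ ^ 2) := (Real.sqrt_sq (norm_nonneg _)).symm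
    _ ≤ Real.sqrt ((∑ i, ∑ k, ‖⟪e i, T (e k)⟫_ℂ‖ ^ 2) * ‖x‖ ^ 2) := Real.sqrt_le_sqrt key
    _ = Real.sqrt (∑ i, ∑ k, ‖⟪e i, T (e k)⟫_ℂ‖ ^ 2) * ‖x‖ := by
        rw [Real.sqrt_mul (by positivity), Real.sqrt_sq (norm_nonneg _)]

/-- Variance bound: for a probability vector `p` and values `c` of diameter at most `Δ`,
the variance is at most `Δ²/2 · ∑ p(1-p)`. -/
lemma stmt2_var_bound {n : ℕ} (p c : Fin n → ℝ) (hp : ∀ j, 0 ≤ p j)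
    (hsum : ∑ j, p j = 1) (Δ : ℝ) (hΔ : ∀ j l, |c j - c l| ≤ Δ) :
    ∑ j, c j ^ 2 * p j - (∑ j, c j * p j) ^ 2 ≤ Δ ^ 2 / 2 * ∑ j, p j * (1 - p j) := by
  set S1 := ∑ j, c j * p j with hS1
  set S2 := ∑ j, c j ^ 2 * p j with hS2
  have inner : ∀ j, ∑ l, p j * p l * (c j - c l) ^ 2
      = c j ^ 2 * p j - 2 * S1 * (c j * p j) + S2 * p j := by
    intro j
    have h : ∀ l, p j * p l * (c j - c l) ^ 2
        = c j ^ 2 * p j * p l - 2 * c j * p j * (c l * p l) + p j * (c l ^ 2 * p l) :=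
      fun l => by ring
    simp_rw [h, Finset.sum_add_distrib, Finset.sum_sub_distrib, ← Finset.mul_sum]
    rw [← hS1, ← hS2, hsum]
    ring
  have key : ∑ j, ∑ l, p j * p l * (c j - c l) ^ 2 = 2 * S2 - 2 * S1 ^ 2 := by
    simp_rw [inner, Finset.sum_add_distrib, Finset.sum_sub_distrib, ← Finset.mul_sum]
    rw [← hS1, ← hS2, hsum]
    ring
  have bound : ∑ j, ∑ l, p j * p l * (c j - c l) ^ 2
      ≤ Δ ^ 2 * ∑ j, p j * (1 - p j) := by
    have step : ∀ j, ∑ l, p j * p l * (c j - c l) ^ 2 ≤ Δ ^ 2 * (p j * (1 - p j)) := by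
      intro j
      have h1 : ∑ l, p j * p l * (c j - c l) ^ 2
          ≤ ∑ l, (if l = j then 0 else Δ ^ 2 * (p j * p l)) := by
        refine Finset.sum_le_sum fun l _ => ?_
        by_cases hl : l = j
        · simp [hl]
        · simp only [hl, if_false]
          have hc : (c j - c l) ^ 2 ≤ Δ ^ 2 := by
            rw [← sq_abs]
            exact pow_le_pow_left₀ (abs_nonneg _) (hΔ j l) 2
          calc p j * p l * (c j - c l) ^ 2 ≤ p j * p l * Δ ^ 2 :=
                mul_le_mul_of_nonneg_left hc (mul_nonneg (hp j) (hp l))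
            _ = Δ ^ 2 * (p j * p l) := by ring
      have h2 : (∑ l, (if l = j then 0 else Δ ^ 2 * (p j * p l)))
          = Δ ^ 2 * (p j * (1 - p j)) := by
        have e1 : ∀ l : Fin n, (if l = j then 0 else Δ ^ 2 * (p j * p l))
            = Δ ^ 2 * (p j * p l) - (if l = j then Δ ^ 2 * (p j * p l) else 0) := by
          intro l; by_cases hl : l = j <;> simp [hl]
        simp_rw [e1]
        rw [Finset.sum_sub_distrib,
          Finset.sum_ite_eq' Finset.univ j (fun l => Δ ^ 2 * (p j * p l)),
          if_pos (Finset.mem_univ j)]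
        simp_rw [← Finset.mul_sum]
        rw [hsum]
        ring
      exact h1.trans_eq h2
    calc ∑ j, ∑ l, p j * p l * (c j - c l) ^ 2
        ≤ ∑ j, Δ ^ 2 * (p j * (1 - p j)) := Finset.sum_le_sum fun j _ => step j
      _ = Δ ^ 2 * ∑ j, p j * (1 - p j) := by rw [Finset.mul_sum]
  rw [key] at bound
  linarith

end Stmt2Aux

/-- **Almost-commuting bound from close eigenbases.**
If Hermitian operators `A`, `B` on an `n`-dimensional Hilbert space have spectra `(aᵢ)`,
`(bⱼ)` and orthonormal eigenbases `(eᵢ)`, `(fⱼ)`, then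
`‖[A,B]‖ ≤ (√n/2) · max_{i,j}|aᵢ-aⱼ| · max_{k,l}|bₖ-bₗ| · d(B_A, B_B)`, where
`d(B_A,B_B)² = ∑_{i,j} |⟨eᵢ|fⱼ⟩|²(1-|⟨eᵢ|fⱼ⟩|²)`. -/
theorem stmt_2 (n : ℕ)
    (A B : EuclideanSpace ℂ (Fin n) →L[ℂ] EuclideanSpace ℂ (Fin n))
    (hA : IsSelfAdjoint A) (hB : IsSelfAdjoint B)
    (a b : Fin n → ℝ)
    (e f : OrthonormalBasis (Fin n) ℂ (EuclideanSpace ℂ (Fin n)))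
    (hAe : ∀ i, A (e i) = (a i : ℂ) • e i)
    (hBf : ∀ j, B (f j) = (b j : ℂ) • f j) :
    ‖A.comp B - B.comp A‖ ≤
      Real.sqrt n / 2 * ((⨆ i, ⨆ j, |a i - a j|) * ⨆ k, ⨆ l, |b k - b l|) *
        Real.sqrt (∑ i, ∑ j, ‖⟪e i, f j⟫_ℂ‖ ^ 2 * (1 - ‖⟪e i, f j⟫_ℂ‖ ^ 2)) := by
  classical
  rcases Nat.eq_zero_or_pos n with hn | hn
  · subst hn
    haveI : Subsingleton (EuclideanSpace ℂ (Fin 0)) :=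
      ⟨fun x y => PiLp.ext fun i => Fin.elim0 i⟩
    have hzero : A.comp B - B.comp A = 0 := Subsingleton.elim _ _
    rw [hzero, norm_zero]
    simp
  haveI : Nonempty (Fin n) := ⟨⟨0, hn⟩⟩
  set Δa := ⨆ i, ⨆ j, |a i - a j| with hΔadef
  set Δb := ⨆ k, ⨆ l, |b k - b l| with hΔbdef
  set d2 := ∑ i, ∑ j, ‖⟪e i, f j⟫_ℂ‖ ^ 2 * (1 - ‖⟪e i, f j⟫_ℂ‖ ^ 2) with hd2def
  -- sup facts
  have ha_le : ∀ i j, |a i - a j| ≤ Δa := fun i j =>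
    (le_ciSup ((Set.finite_range _).bddAbove) j).trans
      (le_ciSup ((Set.finite_range fun i => ⨆ j, |a i - a j|).bddAbove) i)
  have hb_le : ∀ k l, |b k - b l| ≤ Δb := fun k l =>
    (le_ciSup ((Set.finite_range _).bddAbove) l).trans
      (le_ciSup ((Set.finite_range fun k => ⨆ l, |b k - b l|).bddAbove) k)
  have hΔa0 : 0 ≤ Δa := (abs_nonneg _).trans (ha_le (Classical.arbitrary _) (Classical.arbitrary _))
  have hΔb0 : 0 ≤ Δb := (abs_nonneg _).trans (hb_le (Classical.arbitrary _) (Classical.arbitrary _))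
  -- overlap facts
  have hpsum : ∀ k, ∑ j, ‖⟪e k, f j⟫_ℂ‖ ^ 2 = 1 := by
    intro k
    calc ∑ j, ‖⟪e k, f j⟫_ℂ‖ ^ 2 = ∑ j, ‖⟪f j, e k⟫_ℂ‖ ^ 2 := by
          simp_rw [norm_inner_symm]
      _ = ‖e k‖ ^ 2 := (stmt2_parseval f (e k)).symm
      _ = 1 := by rw [e.orthonormal.1 k]; norm_num
  have hple : ∀ k j, ‖⟪e k, f j⟫_ℂ‖ ^ 2 ≤ 1 := by
    intro k j
    rw [← hpsum k]
    exact Finset.single_le_sum (f := fun l => ‖⟪e k, f l⟫_ℂ‖ ^ 2)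
      (fun l _ => sq_nonneg _) (Finset.mem_univ j)
  have hd2nn : 0 ≤ d2 :=
    Finset.sum_nonneg fun i _ => Finset.sum_nonneg fun j _ =>
      mul_nonneg (sq_nonneg _) (by linarith [hple i j])
  -- commutator matrix entries
  have hBf' : ∀ (j : Fin n) (x : EuclideanSpace ℂ (Fin n)),
      ⟪f j, B x⟫_ℂ = (b j : ℂ) * ⟪f j, x⟫_ℂ := by
    intro j x
    conv_lhs => rw [← hB.adjoint_eq]
    rw [ContinuousLinearMap.adjoint_inner_right, hBf j, inner_smul_left, Complex.conj_ofReal]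
  have entry : ∀ i k, ⟪e i, (A.comp B - B.comp A) (e k)⟫_ℂ
      = ((a i - a k : ℝ) : ℂ) * ⟪e i, B (e k)⟫_ℂ := by
    intro i k
    have h1 : ⟪e i, A (B (e k))⟫_ℂ = (a i : ℂ) * ⟪e i, B (e k)⟫_ℂ := by
      conv_lhs => rw [← hA.adjoint_eq]
      rw [ContinuousLinearMap.adjoint_inner_right, hAe i, inner_smul_left, Complex.conj_ofReal]
    have h2 : ⟪e i, B (A (e k))⟫_ℂ = (a k : ℂ) * ⟪e i, B (e k)⟫_ℂ := by
      rw [hAe k, map_smul, inner_smul_right]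
    simp only [ContinuousLinearMap.sub_apply, ContinuousLinearMap.comp_apply,
      inner_sub_right, h1, h2]
    push_cast
    ring
  -- column sums of B in the e-basis
  have hBcol : ∀ k, ∑ i, ‖⟪e i, B (e k)⟫_ℂ‖ ^ 2 = ∑ j, b j ^ 2 * ‖⟪e k, f j⟫_ℂ‖ ^ 2 := by
    intro k
    rw [← stmt2_parseval e (B (e k)), stmt2_parseval f (B (e k))]
    refine Finset.sum_congr rfl fun j _ => ?_
    rw [hBf' j (e k), norm_mul, mul_pow, Complex.norm_real, Real.norm_eq_abs, sq_abs,
      norm_inner_symm (f j) (e k)]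
  have hBdiag : ∀ k, ⟪e k, B (e k)⟫_ℂ = ((∑ j, b j * ‖⟪e k, f j⟫_ℂ‖ ^ 2 : ℝ) : ℂ) := by
    intro k
    rw [← f.sum_inner_mul_inner (e k) (B (e k))]
    push_cast
    refine Finset.sum_congr rfl fun j _ => ?_
    rw [hBf' j (e k), ← inner_conj_symm (f j) (e k)]
    rw [show ⟪e k, f j⟫_ℂ * ((b j : ℂ) * conj ⟪e k, f j⟫_ℂ)
        = (b j : ℂ) * (⟪e k, f j⟫_ℂ * conj ⟪e k, f j⟫_ℂ) from by ring,
      Complex.mul_conj']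
  -- the Hilbert–Schmidt bound
  have hs_bound : ∑ i, ∑ k, ‖⟪e i, (A.comp B - B.comp A) (e k)⟫_ℂ‖ ^ 2
      ≤ Δa ^ 2 * (Δb ^ 2 / 2) * d2 := by
    rw [Finset.sum_comm]
    have col1 : ∀ k, ∑ i, ‖⟪e i, (A.comp B - B.comp A) (e k)⟫_ℂ‖ ^ 2
        ≤ Δa ^ 2 * ((∑ i, ‖⟪e i, B (e k)⟫_ℂ‖ ^ 2) - ‖⟪e k, B (e k)⟫_ℂ‖ ^ 2) := by
      intro k
      have hterm : ∀ i, ‖⟪e i, (A.comp B - B.comp A) (e k)⟫_ℂ‖ ^ 2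
          = (a i - a k) ^ 2 * ‖⟪e i, B (e k)⟫_ℂ‖ ^ 2 := by
        intro i
        rw [entry i k, norm_mul, mul_pow, Complex.norm_real, Real.norm_eq_abs, sq_abs]
      simp_rw [hterm]
      calc ∑ i, (a i - a k) ^ 2 * ‖⟪e i, B (e k)⟫_ℂ‖ ^ 2
          = ∑ i ∈ Finset.univ.erase k, (a i - a k) ^ 2 * ‖⟪e i, B (e k)⟫_ℂ‖ ^ 2 := by
            rw [Finset.sum_erase_eq_sub (Finset.mem_univ k)]
            simp
        _ ≤ ∑ i ∈ Finset.univ.erase k, Δa ^ 2 * ‖⟪e i, B (e k)⟫_ℂ‖ ^ 2 := by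
            refine Finset.sum_le_sum fun i _ => ?_
            have h1 : (a i - a k) ^ 2 ≤ Δa ^ 2 := by
              rw [← sq_abs]
              exact pow_le_pow_left₀ (abs_nonneg _) (ha_le i k) 2
            exact mul_le_mul_of_nonneg_right h1 (sq_nonneg _)
        _ = Δa ^ 2 * ((∑ i, ‖⟪e i, B (e k)⟫_ℂ‖ ^ 2) - ‖⟪e k, B (e k)⟫_ℂ‖ ^ 2) := by
            rw [← Finset.mul_sum, Finset.sum_erase_eq_sub (Finset.mem_univ k)]
    have hvar : ∀ k, (∑ i, ‖⟪e i, B (e k)⟫_ℂ‖ ^ 2) - ‖⟪e k, B (e k)⟫_ℂ‖ ^ 2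
        ≤ Δb ^ 2 / 2 * ∑ j, ‖⟪e k, f j⟫_ℂ‖ ^ 2 * (1 - ‖⟪e k, f j⟫_ℂ‖ ^ 2) := by
      intro k
      have hdiagsq : ‖⟪e k, B (e k)⟫_ℂ‖ ^ 2 = (∑ j, b j * ‖⟪e k, f j⟫_ℂ‖ ^ 2) ^ 2 := by
        rw [hBdiag k, Complex.norm_real, Real.norm_eq_abs, sq_abs]
      rw [hBcol k, hdiagsq]
      exact stmt2_var_bound (fun j => ‖⟪e k, f j⟫_ℂ‖ ^ 2) b (fun j => sq_nonneg _)
        (hpsum k) Δb hb_le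
    calc ∑ k, ∑ i, ‖⟪e i, (A.comp B - B.comp A) (e k)⟫_ℂ‖ ^ 2
        ≤ ∑ k, Δa ^ 2 * ((∑ i, ‖⟪e i, B (e k)⟫_ℂ‖ ^ 2) - ‖⟪e k, B (e k)⟫_ℂ‖ ^ 2) :=
          Finset.sum_le_sum fun k _ => col1 k
      _ ≤ ∑ k, Δa ^ 2 * (Δb ^ 2 / 2 * ∑ j, ‖⟪e k, f j⟫_ℂ‖ ^ 2 * (1 - ‖⟪e k, f j⟫_ℂ‖ ^ 2)) :=
          Finset.sum_le_sum fun k _ =>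
            mul_le_mul_of_nonneg_left (hvar k) (sq_nonneg _)
      _ = Δa ^ 2 * (Δb ^ 2 / 2) * d2 := by
          rw [hd2def, ← Finset.mul_sum]
          simp_rw [← Finset.mul_sum]
          ring
  have final1 : ‖A.comp B - B.comp A‖ ≤ Real.sqrt (Δa ^ 2 * (Δb ^ 2 / 2) * d2) :=
    (stmt2_opNorm_le_hs (A.comp B - B.comp A) e).trans (Real.sqrt_le_sqrt hs_bound)
  rcases eq_or_lt_of_le (show 1 ≤ n from hn) with h1 | h2
  · -- n = 1 : Δa = 0
    haveI : Subsingleton (Fin n) := by rw [← h1]; infer_instance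
    have hΔa : Δa = 0 := by
      have h0 : ∀ i j : Fin n, |a i - a j| = 0 := fun i j => by
        rw [Subsingleton.elim i j, sub_self, abs_zero]
      rw [hΔadef]
      simp_rw [h0]
      simp [ciSup_const]
    have hle0 : ‖A.comp B - B.comp A‖ ≤ 0 := by
      have : Real.sqrt (Δa ^ 2 * (Δb ^ 2 / 2) * d2) = 0 := by
        rw [hΔa]
        norm_num
      linarith [final1, this ▸ final1]
    rw [hΔa]
    have : Real.sqrt (n : ℝ) / 2 * (0 * Δb) * Real.sqrt d2 = 0 := by ring
    linarith [hle0, this]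
  · -- n ≥ 2
    have h2n : (2 : ℝ) ≤ (n : ℝ) := by exact_mod_cast h2
    have hrhs : Real.sqrt (Δa ^ 2 * (Δb ^ 2 / 2) * d2)
        ≤ Real.sqrt (n : ℝ) / 2 * (Δa * Δb) * Real.sqrt d2 := by
      have hrhs_nn : 0 ≤ Real.sqrt (n : ℝ) / 2 * (Δa * Δb) * Real.sqrt d2 := by positivity
      have hsq : (Real.sqrt (n : ℝ) / 2 * (Δa * Δb) * Real.sqrt d2) ^ 2
          = (n : ℝ) / 4 * (Δa ^ 2 * Δb ^ 2) * d2 := by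
        rw [mul_pow, mul_pow, Real.sq_sqrt hd2nn, div_pow,
          Real.sq_sqrt (by positivity : (0:ℝ) ≤ (n:ℝ)), mul_pow]
        ring
      have key2 : Δa ^ 2 * (Δb ^ 2 / 2) * d2
          ≤ (Real.sqrt (n : ℝ) / 2 * (Δa * Δb) * Real.sqrt d2) ^ 2 := by
        rw [hsq]
        nlinarith [mul_nonneg (mul_nonneg (sq_nonneg Δa) (sq_nonneg Δb)) hd2nn, h2n,
          sq_nonneg Δa, sq_nonneg Δb, hd2nn]
      calc Real.sqrt (Δa ^ 2 * (Δb ^ 2 / 2) * d2)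
          ≤ Real.sqrt ((Real.sqrt (n : ℝ) / 2 * (Δa * Δb) * Real.sqrt d2) ^ 2) :=
            Real.sqrt_le_sqrt key2
        _ = Real.sqrt (n : ℝ) / 2 * (Δa * Δb) * Real.sqrt d2 := Real.sqrt_sq hrhs_nn
    exact final1.trans hrhs
end

section
/- Let $\hat{A}$ and $\hat{B}$ be Hermitian operators on an $n$-dimensional Hilbert space with non-degenerate spectra $(a_i)$ and $(b_j)$ and orthonormal eigenbases $(\ket{e_i})$, $(\ket{f_j})$. Then $d(\mathcal{B}_{\hat{A}}, \mathcal{B}_{\hat{B}}) \le \frac{\sqrt{2n}}{c}\, \|[\hat{A},\hat{B}]\|_{op}$, where $c = \min_{i\ne j}|a_i - a_j| \cdot \min_{k\ne l}|b_k - b_l|$ and $d(\mathcal{B}_1,\mathcal{B}_2)^2 = \sum_{i,j}|\langle e_i|f_j\rangle|^2(1-|\langle e_i|f_j\rangle|^2)$. -/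
open scoped BigOperators InnerProductSpace

private lemma parseval_aux {n : ℕ} (u : OrthonormalBasis (Fin n) ℂ (EuclideanSpace ℂ (Fin n)))
    (x : EuclideanSpace ℂ (Fin n)) : ∑ i, ‖⟪u i, x⟫_ℂ‖ ^ 2 = ‖x‖ ^ 2 := by
  have h : ‖u.repr x‖ = ‖x‖ := u.repr.norm_map x
  rw [← h, EuclideanSpace.norm_eq, Real.sq_sqrt (by positivity)]
  exact Finset.sum_congr rfl fun i _ => by rw [u.repr_apply_apply]

/-- **Close eigenbases from almost commuting.**
If Hermitian operators `A`, `B` on an `n`-dimensional Hilbert space have non-degenerate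
spectra `(aᵢ)`, `(bⱼ)` and orthonormal eigenbases `(eᵢ)`, `(fⱼ)`, then
`d(B_A,B_B) ≤ (√(2n)/c) ‖[A,B]‖` with `c = min_{i≠j}|aᵢ-aⱼ| · min_{k≠l}|bₖ-bₗ|`. -/
theorem stmt_3 (n : ℕ)
    (A B : EuclideanSpace ℂ (Fin n) →L[ℂ] EuclideanSpace ℂ (Fin n))
    (hA : IsSelfAdjoint A) (hB : IsSelfAdjoint B)
    (a b : Fin n → ℝ) (ha : Function.Injective a) (hb : Function.Injective b)
    (e f : OrthonormalBasis (Fin n) ℂ (EuclideanSpace ℂ (Fin n)))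
    (hAe : ∀ i, A (e i) = (a i : ℂ) • e i)
    (hBf : ∀ j, B (f j) = (b j : ℂ) • f j) :
    Real.sqrt (∑ i, ∑ j, ‖⟪e i, f j⟫_ℂ‖ ^ 2 * (1 - ‖⟪e i, f j⟫_ℂ‖ ^ 2)) ≤
      Real.sqrt (2 * n) /
        (sInf {r : ℝ | ∃ i j, i ≠ j ∧ r = |a i - a j|} *
          sInf {r : ℝ | ∃ k l, k ≠ l ∧ r = |b k - b l|}) *
        ‖A.comp B - B.comp A‖ := by
  classical
  have hAs : ∀ x y, ⟪A x, y⟫_ℂ = ⟪x, A y⟫_ℂ :=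
    ContinuousLinearMap.isSelfAdjoint_iff_isSymmetric.mp hA
  have hBs : ∀ x y, ⟪B x, y⟫_ℂ = ⟪x, B y⟫_ℂ :=
    ContinuousLinearMap.isSelfAdjoint_iff_isSymmetric.mp hB
  set K : EuclideanSpace ℂ (Fin n) →L[ℂ] EuclideanSpace ℂ (Fin n) := A.comp B - B.comp A with hK
  set Sa : Set ℝ := {r : ℝ | ∃ i j, i ≠ j ∧ r = |a i - a j|} with hSa
  set Sb : Set ℝ := {r : ℝ | ∃ k l, k ≠ l ∧ r = |b k - b l|} with hSb
  set α : ℝ := sInf Sa with hα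
  set β : ℝ := sInf Sb with hβ
  set p : Fin n → Fin n → ℝ := fun i j => ‖⟪e i, f j⟫_ℂ‖ ^ 2 with hp
  set q : Fin n → Fin n → ℝ := fun k i => ‖⟪e k, B (e i)⟫_ℂ‖ ^ 2 with hq
  -- Parseval : rows of the overlap matrix sum to 1
  have hp1 : ∀ i, ∑ j, p i j = 1 := by
    intro i
    have h1 : ∑ j, ‖⟪f j, e i⟫_ℂ‖ ^ 2 = ‖e i‖ ^ 2 := parseval_aux f (e i)
    have h2 : ‖e i‖ = 1 := e.orthonormal.1 i
    calc ∑ j, p i j = ∑ j, ‖⟪f j, e i⟫_ℂ‖ ^ 2 :=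
          Finset.sum_congr rfl fun j _ => by simp only [hp]; rw [norm_inner_symm]
      _ = 1 := by rw [h1, h2, one_pow]
  have hpnonneg : ∀ i j, 0 ≤ p i j := fun i j => by positivity
  have hqnonneg : ∀ k i, 0 ≤ q k i := fun k i => by positivity
  -- action of B on inner products against f-basis
  have hBf' : ∀ j x, ⟪f j, B x⟫_ℂ = (b j : ℂ) * ⟪f j, x⟫_ℂ := by
    intro j x
    rw [← hBs (f j) x, hBf j, inner_smul_left, Complex.conj_ofReal]
  -- key identity:  ∑_{j,l} (b_j - b_l)^2 p_{ij} p_{il} = 2 ∑_{k ≠ i} q k i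
  have hA4 : ∀ i, ∑ j, ∑ l, (b j - b l) ^ 2 * (p i j * p i l)
      = 2 * ∑ k ∈ Finset.univ.erase i, q k i := by
    intro i
    set S : ℝ := ∑ j, (b j) ^ 2 * p i j with hS
    set R : ℝ := ∑ j, b j * p i j with hR
    have hSval : S = ‖B (e i)‖ ^ 2 := by
      rw [hS, ← parseval_aux f (B (e i))]
      refine Finset.sum_congr rfl fun j _ => ?_
      rw [hBf' j (e i), norm_mul, mul_pow, Complex.norm_real, Real.norm_eq_abs, sq_abs,
        norm_inner_symm (f j) (e i)]
    have hRval : ⟪e i, B (e i)⟫_ℂ = (R : ℂ) := by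
      have hterm : ∀ j, ⟪e i, f j⟫_ℂ * ⟪f j, B (e i)⟫_ℂ = ((b j * p i j : ℝ) : ℂ) := by
        intro j
        rw [hBf' j (e i), ← inner_conj_symm (f j) (e i)]
        have hz : ⟪e i, f j⟫_ℂ * ((b j : ℂ) * (starRingEnd ℂ) ⟪e i, f j⟫_ℂ)
            = (b j : ℂ) * (⟪e i, f j⟫_ℂ * (starRingEnd ℂ) ⟪e i, f j⟫_ℂ) := by ring
        have hns : Complex.normSq ⟪e i, f j⟫_ℂ = p i j := by
          rw [← Complex.sq_norm]
        rw [hz, Complex.mul_conj, hns]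
        push_cast
        ring
      rw [← f.sum_inner_mul_inner (e i) (B (e i)), hR]
      calc ∑ j, ⟪e i, f j⟫_ℂ * ⟪f j, B (e i)⟫_ℂ
          = ∑ j, ((b j * p i j : ℝ) : ℂ) := Finset.sum_congr rfl fun j _ => hterm j
        _ = ((∑ j, b j * p i j : ℝ) : ℂ) := by norm_cast
    have hsumq : ∑ k, q k i = ‖B (e i)‖ ^ 2 := parseval_aux e (B (e i))
    have hqii : q i i = R ^ 2 := by
      simp only [hq]
      rw [hRval, Complex.norm_real, Real.norm_eq_abs, sq_abs]
    have herase : ∑ k ∈ Finset.univ.erase i, q k i = S - R ^ 2 := by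
      have := Finset.add_sum_erase Finset.univ (fun k => q k i) (Finset.mem_univ i)
      rw [hsumq, ← hSval] at this
      rw [← hqii]; linarith
    -- expand the square
    have hexp : ∀ j, ∑ l, (b j - b l) ^ 2 * (p i j * p i l)
        = (b j) ^ 2 * p i j * (∑ l, p i l) + p i j * (∑ l, (b l) ^ 2 * p i l)
          - 2 * ((b j * p i j) * ∑ l, b l * p i l) := by
      intro j
      simp only [Finset.mul_sum]
      rw [← Finset.sum_add_distrib, ← Finset.sum_sub_distrib]
      exact Finset.sum_congr rfl fun l _ => by ring
    have : ∑ j, ∑ l, (b j - b l) ^ 2 * (p i j * p i l)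
        = ∑ j, ((b j) ^ 2 * p i j + p i j * S - 2 * ((b j * p i j) * R)) := by
      refine Finset.sum_congr rfl fun j _ => ?_
      rw [hexp j, hp1 i, ← hS, ← hR, mul_one]
    rw [this, Finset.sum_sub_distrib, Finset.sum_add_distrib, herase]
    have e1 : ∑ j, p i j * S = S := by rw [← Finset.sum_mul, hp1 i, one_mul]
    have e2 : ∑ j, 2 * (b j * p i j * R) = 2 * (R * R) := by
      rw [← Finset.mul_sum, ← Finset.sum_mul, ← hR]
    rw [e1, e2, ← hS]
    ring
  -- matrix elements of the commutator
  have hKe : ∀ i k, ⟪e k, K (e i)⟫_ℂ = ((a k - a i : ℝ) : ℂ) * ⟪e k, B (e i)⟫_ℂ := by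
    intro i k
    have h1 : K (e i) = A (B (e i)) - B (A (e i)) := by
      rw [hK]; rfl
    rw [h1, inner_sub_right]
    have h2 : ⟪e k, A (B (e i))⟫_ℂ = (a k : ℂ) * ⟪e k, B (e i)⟫_ℂ := by
      rw [← hAs (e k) (B (e i)), hAe k, inner_smul_left, Complex.conj_ofReal]
    have h3 : ⟪e k, B (A (e i))⟫_ℂ = (a i : ℂ) * ⟪e k, B (e i)⟫_ℂ := by
      rw [hAe i, map_smul, inner_smul_right]
    rw [h2, h3]
    push_cast
    ring
  have hKnorm : ∀ i k, ‖⟪e k, K (e i)⟫_ℂ‖ ^ 2 = (a k - a i) ^ 2 * q k i := by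
    intro i k
    rw [hKe i k, norm_mul, mul_pow, Complex.norm_real, Real.norm_eq_abs, sq_abs]
  -- gap bounds
  rcases lt_or_ge n 2 with hn | hn
  · -- degenerate case n ≤ 1
    haveI hsub : Subsingleton (Fin n) :=
      ⟨fun i j => by
        have h1 := i.isLt; have h2 := j.isLt
        exact Fin.ext (by omega)⟩
    have hSaE : Sa = ∅ := by
      rw [hSa]; ext r
      simp only [Set.mem_setOf_eq, Set.mem_empty_iff_false, iff_false]
      rintro ⟨i, j, hij, -⟩
      exact hij (Subsingleton.elim i j)
    have hSbE : Sb = ∅ := by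
      rw [hSb]; ext r
      simp only [Set.mem_setOf_eq, Set.mem_empty_iff_false, iff_false]
      rintro ⟨i, j, hij, -⟩
      exact hij (Subsingleton.elim i j)
    have hD0 : ∑ i, ∑ j, p i j * (1 - p i j) = 0 := by
      refine Finset.sum_eq_zero fun i _ => Finset.sum_eq_zero fun j _ => ?_
      have h1 : p i j = 1 := by
        rw [← hp1 i]
        exact (Fintype.sum_subsingleton (p i) j).symm
      rw [h1]; ring
    rw [hD0, Real.sqrt_zero, hα, hβ, hSaE, hSbE, Real.sInf_empty, mul_zero, div_zero,
      zero_mul]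
  · -- main case : n ≥ 2, gaps are positive minima
    have hi0 : ((⟨0, by omega⟩ : Fin n) : Fin n) ≠ ⟨1, by omega⟩ := by
      simp [Fin.ext_iff]
    have hSane : Sa.Nonempty := ⟨_, ⟨_, _, hi0, rfl⟩⟩
    have hSbne : Sb.Nonempty := ⟨_, ⟨_, _, hi0, rfl⟩⟩
    have hSafin : Sa.Finite := by
      apply Set.Finite.subset (Set.finite_range fun pr : Fin n × Fin n => |a pr.1 - a pr.2|)
      rintro r ⟨i, j, -, rfl⟩; exact ⟨(i, j), rfl⟩
    have hSbfin : Sb.Finite := by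
      apply Set.Finite.subset (Set.finite_range fun pr : Fin n × Fin n => |b pr.1 - b pr.2|)
      rintro r ⟨i, j, -, rfl⟩; exact ⟨(i, j), rfl⟩
    have hαpos : 0 < α := by
      obtain ⟨i, j, hij, hr⟩ := hSane.csInf_mem hSafin
      rw [hα, hr]
      exact abs_pos.mpr (sub_ne_zero.mpr fun h => hij (ha h))
    have hβpos : 0 < β := by
      obtain ⟨i, j, hij, hr⟩ := hSbne.csInf_mem hSbfin
      rw [hβ, hr]
      exact abs_pos.mpr (sub_ne_zero.mpr fun h => hij (hb h))
    have hαle : ∀ i j : Fin n, i ≠ j → α ≤ |a i - a j| := fun i j hij =>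
      csInf_le hSafin.bddBelow ⟨i, j, hij, rfl⟩
    have hβle : ∀ i j : Fin n, i ≠ j → β ≤ |b i - b j| := fun i j hij =>
      csInf_le hSbfin.bddBelow ⟨i, j, hij, rfl⟩
    -- step 1 : β² · row-sum ≤ weighted double sum
    have key_b : ∀ i, β ^ 2 * ∑ j, p i j * (1 - p i j)
        ≤ 2 * ∑ k ∈ Finset.univ.erase i, q k i := by
      intro i
      rw [← hA4 i, Finset.mul_sum]
      refine Finset.sum_le_sum fun j _ => ?_
      have h1 : p i j * (1 - p i j) = ∑ l ∈ Finset.univ.erase j, p i j * p i l := by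
        rw [← Finset.mul_sum]
        congr 1
        have := Finset.add_sum_erase Finset.univ (p i) (Finset.mem_univ j)
        rw [hp1 i] at this
        linarith
      rw [h1, Finset.mul_sum]
      calc ∑ l ∈ Finset.univ.erase j, β ^ 2 * (p i j * p i l)
          ≤ ∑ l ∈ Finset.univ.erase j, (b j - b l) ^ 2 * (p i j * p i l) := by
            refine Finset.sum_le_sum fun l hl => ?_
            have hjl : j ≠ l := fun h => (Finset.mem_erase.mp hl).1 h.symm
            have : β ≤ |b j - b l| := hβle j l hjl
            have hb2 : β ^ 2 ≤ (b j - b l) ^ 2 := by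
              rw [← sq_abs (b j - b l)]
              exact pow_le_pow_left₀ hβpos.le this 2
            exact mul_le_mul_of_nonneg_right hb2 (mul_nonneg (hpnonneg i j) (hpnonneg i l))
        _ ≤ ∑ l, (b j - b l) ^ 2 * (p i j * p i l) := by
            refine Finset.sum_le_sum_of_subset_of_nonneg (Finset.subset_univ _) fun l _ _ => ?_
            positivity
    -- step 2 : α² · middle quantity ≤ Frobenius norm of commutator ≤ n‖K‖²
    have key_a : ∀ i, α ^ 2 * (2 * ∑ k ∈ Finset.univ.erase i, q k i) ≤ 2 * ‖K‖ ^ 2 := by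
      intro i
      have h1 : α ^ 2 * ∑ k ∈ Finset.univ.erase i, q k i ≤ ∑ k, (a k - a i) ^ 2 * q k i := by
        rw [Finset.mul_sum]
        calc ∑ k ∈ Finset.univ.erase i, α ^ 2 * q k i
            ≤ ∑ k ∈ Finset.univ.erase i, (a k - a i) ^ 2 * q k i := by
              refine Finset.sum_le_sum fun k hk => ?_
              have hki : k ≠ i := (Finset.mem_erase.mp hk).1
              have : α ≤ |a k - a i| := hαle k i hki
              have ha2 : α ^ 2 ≤ (a k - a i) ^ 2 := by
                rw [← sq_abs (a k - a i)]
                exact pow_le_pow_left₀ hαpos.le this 2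
              exact mul_le_mul_of_nonneg_right ha2 (hqnonneg k i)
          _ ≤ ∑ k, (a k - a i) ^ 2 * q k i := by
              refine Finset.sum_le_sum_of_subset_of_nonneg (Finset.subset_univ _) fun k _ _ => ?_
              positivity
      have h2 : ∑ k, (a k - a i) ^ 2 * q k i = ‖K (e i)‖ ^ 2 := by
        rw [← parseval_aux e (K (e i))]
        exact Finset.sum_congr rfl fun k _ => (hKnorm i k).symm
      have h3 : ‖K (e i)‖ ^ 2 ≤ ‖K‖ ^ 2 := by
        have h4 : ‖K (e i)‖ ≤ ‖K‖ := by
          have := K.le_opNorm (e i)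
          rwa [e.orthonormal.1 i, mul_one] at this
        exact pow_le_pow_left₀ (norm_nonneg _) h4 2
      nlinarith [h1, h2.le, h2.ge, h3]
    -- combine
    set D : ℝ := ∑ i, ∑ j, p i j * (1 - p i j) with hD
    have hDnonneg : 0 ≤ D := by
      refine Finset.sum_nonneg fun i _ => Finset.sum_nonneg fun j _ => ?_
      have hle1 : p i j ≤ 1 := by
        rw [← hp1 i]
        exact Finset.single_le_sum (fun l _ => hpnonneg i l) (Finset.mem_univ j)
      have := hpnonneg i j
      nlinarith
    have hchain : α ^ 2 * (β ^ 2 * D) ≤ 2 * n * ‖K‖ ^ 2 := by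
      have t1 : β ^ 2 * D ≤ ∑ i, 2 * ∑ k ∈ Finset.univ.erase i, q k i := by
        rw [hD, Finset.mul_sum]
        exact Finset.sum_le_sum fun i _ => key_b i
      have t2 : α ^ 2 * ∑ i, 2 * ∑ k ∈ Finset.univ.erase i, q k i ≤ 2 * n * ‖K‖ ^ 2 := by
        rw [Finset.mul_sum]
        calc ∑ i, α ^ 2 * (2 * ∑ k ∈ Finset.univ.erase i, q k i)
            ≤ ∑ _i : Fin n, 2 * ‖K‖ ^ 2 := Finset.sum_le_sum fun i _ => key_a i
          _ = 2 * n * ‖K‖ ^ 2 := by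
              rw [Finset.sum_const, Finset.card_univ, Fintype.card_fin, nsmul_eq_mul]; ring
      calc α ^ 2 * (β ^ 2 * D)
          ≤ α ^ 2 * ∑ i, 2 * ∑ k ∈ Finset.univ.erase i, q k i :=
            mul_le_mul_of_nonneg_left t1 (by positivity)
        _ ≤ 2 * n * ‖K‖ ^ 2 := t2
    have hfin : D ≤ (Real.sqrt (2 * n) / (α * β) * ‖K‖) ^ 2 := by
      have h2n : Real.sqrt (2 * (n : ℝ)) ^ 2 = 2 * n := Real.sq_sqrt (by positivity)
      have hsq : (Real.sqrt (2 * (n : ℝ)) / (α * β) * ‖K‖) ^ 2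
          = 2 * n * ‖K‖ ^ 2 / (α * β) ^ 2 := by
        rw [mul_pow, div_pow, h2n]; ring
      rw [hsq, le_div_iff₀ (by positivity)]
      nlinarith [hchain]
    calc Real.sqrt D ≤ Real.sqrt ((Real.sqrt (2 * n) / (α * β) * ‖K‖) ^ 2) :=
          Real.sqrt_le_sqrt hfin
      _ = Real.sqrt (2 * n) / (α * β) * ‖K‖ := Real.sqrt_sq (by positivity)
end

section
/- For every constant $c > 0$ there exist a qubit density matrix $\rho$, an orthonormal basis $\mathcal{B}$ of $\mathbb{C}^2$, and a one-dimensional subspace $F$ with projector $\Pi_F$ such that $|\mathrm{tr}(\rho \Pi_F) - \mathrm{tr}(D_{\mathcal{B}}[\rho]\Pi_F)| > \dim(F)\cdot c\,[S(D_{\mathcal{B}}[\rho]) - S(\rho)]$, where $S$ is the von Neumann entropy. Concretely, one may take $\rho = \frac{1}{2}\begin{pmatrix}1 & \varepsilon\\ \varepsilon & 1\end{pmatrix}$ in $\mathcal{B}$ and $F$ spanned by $(\ket{e_1}+\ket{e_2})/\sqrt{2}$, for sufficiently small $\varepsilon > 0$. -/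
open scoped BigOperators ComplexOrder

open Classical in
/-- Von Neumann entropy of a Hermitian matrix, via its eigenvalues
(`0` as junk value for non-Hermitian matrices). -/
noncomputable def vonNeumannEntropy {n : ℕ} (ρ : Matrix (Fin n) (Fin n) ℂ) : ℝ :=
  if h : ρ.IsHermitian then ∑ i, Real.negMulLog (h.eigenvalues i) else 0

lemma trace_eq_sum_eig {n : Type*} [Fintype n] [DecidableEq n]
    {A : Matrix n n ℂ} (hA : A.IsHermitian) :
    A.trace = ∑ i, (hA.eigenvalues i : ℂ) := by
  exact hA.trace_eq_sum_eigenvalues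

lemma entropy_two {ρ : Matrix (Fin 2) (Fin 2) ℂ} (h : ρ.IsHermitian) (a b : ℝ)
    (htr : ρ.trace = (a : ℂ) + b) (hdet : ρ.det = (a : ℂ) * b) :
    vonNeumannEntropy ρ = Real.negMulLog a + Real.negMulLog b := by
  rw [vonNeumannEntropy, dif_pos h]
  rw [Fin.sum_univ_two]
  obtain ⟨e0, he0⟩ : ∃ x, h.eigenvalues 0 = x := ⟨_, rfl⟩
  obtain ⟨e1, he1⟩ : ∃ x, h.eigenvalues 1 = x := ⟨_, rfl⟩
  rw [he0, he1]
  have h1 : e0 + e1 = a + b := by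
    have := (trace_eq_sum_eig h).symm.trans htr
    rw [Fin.sum_univ_two, he0, he1] at this
    exact_mod_cast this
  have h2 : e0 * e1 = a * b := by
    have := (h.det_eq_prod_eigenvalues).symm.trans hdet
    rw [Fin.prod_univ_two, he0, he1] at this
    apply_fun Complex.re at this
    simpa using this
  have key : (e0 - a) * (e0 - b) = 0 := by linear_combination e0 * h1 - h2
  rcases mul_eq_zero.mp key with hk | hk
  · have ha : e0 = a := by linarith
    have hb : e1 = b := by linarith
    rw [ha, hb]
  · have ha : e0 = b := by linarith
    have hb : e1 = a := by linarith
    rw [ha, hb, add_comm]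

/-- **The relative entropy of coherence is not a measure of coherence:** for every `c > 0`
there are a qubit density matrix `ρ`, an orthonormal basis (here encoded by taking the
computational basis, in which the diagonal part is `D = diagonal of ρ`), and a
one-dimensional orthogonal projector `Π` such that
`|tr(ρΠ) - tr(DΠ)| > dim F · c · (S(D) - S(ρ))`. -/
theorem stmt_11 (c : ℝ) (hc : 0 < c) :
    ∃ ρ P : Matrix (Fin 2) (Fin 2) ℂ,
      ρ.PosSemidef ∧ ρ.trace = 1 ∧
      P.IsHermitian ∧ P * P = P ∧ P.trace = 1 ∧
      ‖(ρ * P).trace - (Matrix.diagonal (fun i => ρ i i) * P).trace‖ >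
        1 * c *
          (vonNeumannEntropy (Matrix.diagonal fun i => ρ i i) - vonNeumannEntropy ρ) := by
  set ε : ℝ := 1 / (2 * c + 2) with hεdef
  have hε : 0 < ε := by positivity
  have hε1 : ε < 1 := by
    rw [hεdef, div_lt_one (by linarith)]; linarith
  have hcε : c * ε < 1 / 2 := by
    rw [hεdef, mul_one_div, div_lt_div_iff₀ (by linarith) (by norm_num)]; linarith
  refine ⟨!![(1/2 : ℂ), ε/2; ε/2, 1/2], !![(1/2 : ℂ), 1/2; 1/2, 1/2], ?_, ?_, ?_, ?_, ?_, ?_⟩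
  · rw [Matrix.posSemidef_iff_dotProduct_mulVec]
    constructor
    · ext i j
      fin_cases i <;> fin_cases j <;>
        simp [Matrix.conjTranspose_apply]
    · intro x
      have key : dotProduct (star x) (Matrix.mulVec !![(1/2 : ℂ), ε/2; ε/2, 1/2] x) =
          Complex.ofReal (((1 - ε)/2) * (Complex.normSq (x 0) + Complex.normSq (x 1))
            + (ε/2) * Complex.normSq (x 0 + x 1)) := by
        simp [dotProduct, Matrix.mulVec, Fin.sum_univ_two, Complex.normSq_apply,
          Complex.ext_iff, Matrix.vecHead, Matrix.vecTail, Pi.star_apply, Complex.star_def]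
        constructor <;> ring
      rw [key]
      have : (0:ℝ) ≤ ((1 - ε)/2) * (Complex.normSq (x 0) + Complex.normSq (x 1))
            + (ε/2) * Complex.normSq (x 0 + x 1) := by
        have h1 := Complex.normSq_nonneg (x 0)
        have h2 := Complex.normSq_nonneg (x 1)
        have h3 := Complex.normSq_nonneg (x 0 + x 1)
        nlinarith
      exact_mod_cast this
  · simp [Matrix.trace_fin_two]; ring
  · ext i j
    fin_cases i <;> fin_cases j <;> simp [Matrix.conjTranspose_apply]
  · norm_num [Matrix.mul_fin_two]
  · simp [Matrix.trace_fin_two]; ring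
  · -- identify the diagonal part
    have hρH : (!![(1/2 : ℂ), ε/2; ε/2, 1/2]).IsHermitian := by
      ext i j
      fin_cases i <;> fin_cases j <;> simp [Matrix.conjTranspose_apply]
    have hD : (Matrix.diagonal fun i => !![(1/2 : ℂ), ε/2; ε/2, 1/2] i i)
        = Matrix.diagonal (fun _ => (1/2 : ℂ)) := by
      ext i j
      fin_cases i <;> fin_cases j <;> simp [Matrix.diagonal]
    rw [hD]
    have hDH : (Matrix.diagonal (fun _ : Fin 2 => (1/2 : ℂ))).IsHermitian := by
      ext i j
      fin_cases i <;> fin_cases j <;> simp [Matrix.conjTranspose_apply, Matrix.diagonal]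
    -- trace difference
    have htrdiff : ((!![(1/2 : ℂ), ε/2; ε/2, 1/2] * !![(1/2 : ℂ), 1/2; 1/2, 1/2]).trace -
        (Matrix.diagonal (fun _ : Fin 2 => (1/2 : ℂ)) * !![(1/2 : ℂ), 1/2; 1/2, 1/2]).trace)
        = Complex.ofReal (ε/2) := by
      simp [Matrix.trace_fin_two, Matrix.mul_apply, Fin.sum_univ_two, Matrix.diagonal,
        Complex.ext_iff]
      ring
    rw [htrdiff, Complex.norm_of_nonneg (show (0:ℝ) ≤ ε/2 by linarith)]
    -- entropies
    have hSD : vonNeumannEntropy (Matrix.diagonal (fun _ : Fin 2 => (1/2 : ℂ)))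
        = Real.negMulLog (1/2) + Real.negMulLog (1/2) := by
      apply entropy_two hDH
      · simp [Matrix.trace_diagonal, Fin.sum_univ_two]; norm_num
      · rw [Matrix.det_diagonal]
        simp [Fin.prod_univ_two]; norm_num
    have hSρ : vonNeumannEntropy !![(1/2 : ℂ), ε/2; ε/2, 1/2]
        = Real.negMulLog ((1+ε)/2) + Real.negMulLog ((1-ε)/2) := by
      apply entropy_two hρH
      · simp [Matrix.trace_fin_two]
        ring
      · rw [Matrix.det_fin_two_of]
        push_cast
        ring
    rw [hSD, hSρ]
    -- the real inequality
    have hlog2 : Real.log (1/2) = -Real.log 2 := by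
      rw [one_div, Real.log_inv]
    have hlogp : Real.log ((1+ε)/2) = Real.log (1+ε) - Real.log 2 :=
      Real.log_div (by linarith) (by norm_num)
    have hlogm : Real.log ((1-ε)/2) = Real.log (1-ε) - Real.log 2 :=
      Real.log_div (by linarith) (by norm_num)
    have hΔ : Real.negMulLog (1/2) + Real.negMulLog (1/2)
        - (Real.negMulLog ((1+ε)/2) + Real.negMulLog ((1-ε)/2))
        = (1+ε)/2 * Real.log (1+ε) + (1-ε)/2 * Real.log (1-ε) := by
      simp only [Real.negMulLog, hlog2, hlogp, hlogm]
      ring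
    rw [hΔ]
    have l1 : Real.log (1+ε) ≤ ε := by
      have := Real.log_le_sub_one_of_pos (show (0:ℝ) < 1+ε by linarith)
      linarith
    have l2 : Real.log (1-ε) ≤ -ε := by
      have := Real.log_le_sub_one_of_pos (show (0:ℝ) < 1-ε by linarith)
      linarith
    have m1 : (1+ε)/2 * Real.log (1+ε) ≤ (1+ε)/2 * ε :=
      mul_le_mul_of_nonneg_left l1 (by linarith)
    have m2 : (1-ε)/2 * Real.log (1-ε) ≤ (1-ε)/2 * (-ε) :=
      mul_le_mul_of_nonneg_left l2 (by linarith)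
    have hsum : (1+ε)/2 * Real.log (1+ε) + (1-ε)/2 * Real.log (1-ε) ≤ ε^2 := by nlinarith
    nlinarith [mul_le_mul_of_nonneg_left hsum hc.le]
end
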